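/- Let T > 0, r ≥ 1 and β ∈ (0,1/2). Then there exists a constant C > 0, independent of N and n, such that for every integer N ≥ 1 and every n ∈ {1,…,N}, ∫_0^{t_n} |(t_n − s)^{−β} − (t_n − ŝ)^{−β}|² ds ≤ C·N^{−(1−2β)}, where ŝ is the left graded-mesh point of s. -/

import Mathlib

open MeasureTheory Real Set intervalIntegral

/-- Bernoulli-type lower bound: for `0 < x`, `0 ≤ y`, `1 ≤ r`,
`x ^ r + r * x ^ (r - 1) * (y - x) ≤ y ^ r`. -/
private lemma bern_ge {x y r : ℝ} (hx : 0 < x) (hy : 0 ≤ y) (hr : 1 ≤ r) :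
    x ^ r + r * x ^ (r - 1) * (y - x) ≤ y ^ r := by
  have hs : (-1 : ℝ) ≤ y / x - 1 := by
    have := div_nonneg hy hx.le; linarith
  have h := one_add_mul_self_le_rpow_one_add hs hr
  have h1 : (1 + (y / x - 1)) = y / x := by ring
  rw [h1, Real.div_rpow hy hx.le] at h
  have hxr : (0:ℝ) < x ^ r := Real.rpow_pos_of_pos hx r
  have hx1 : x ^ (r - 1) = x ^ r / x := by
    rw [Real.rpow_sub hx, Real.rpow_one]
  have h2 := mul_le_mul_of_nonneg_left h hxr.le
  calc x ^ r + r * x ^ (r - 1) * (y - x)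
      = x ^ r * (1 + r * (y / x - 1)) := by rw [hx1]; field_simp
    _ ≤ x ^ r * (y ^ r / x ^ r) := h2
    _ = y ^ r := by field_simp

/-- Bernoulli-type upper bound for negative exponents. -/
private lemma bern_neg {a b p : ℝ} (ha : 0 < a) (hab : a ≤ b) (hp : 0 < p) (hp1 : p < 1) :
    a ^ (-p) - b ^ (-p) ≤ p * (b - a) * a ^ (-p - 1) := by
  set t := (b - a) / a with ht'
  have ht : 0 ≤ t := div_nonneg (by linarith) ha.le
  have h1t : (0:ℝ) < 1 + t := by linarith
  have key : 1 - p * t ≤ (1 + t) ^ (-p) := by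
    rcases le_or_gt (1 - p * t) 0 with h | h
    · exact h.trans (Real.rpow_nonneg h1t.le _)
    · have h1 : (1 + t) ^ p ≤ 1 + p * t :=
        rpow_one_add_le_one_add_mul_self (by linarith) hp.le hp1.le
      have hpos : (0:ℝ) < (1 + t) ^ p := Real.rpow_pos_of_pos h1t _
      have hmul : (1 - p * t) * (1 + t) ^ p ≤ 1 := by
        nlinarith [mul_le_mul_of_nonneg_left h1 h.le, sq_nonneg (p * t)]
      rw [Real.rpow_neg h1t.le, le_inv_comm₀ h hpos, inv_eq_one_div]
      calc (1 + t) ^ p = ((1 - p*t) * (1 + t) ^ p) / (1 - p*t) := by rw [mul_div_cancel_left₀ _ h.ne']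
        _ ≤ 1 / (1 - p*t) := by gcongr
  have hb : b = a * (1 + t) := by
    have ha' : a ≠ 0 := ha.ne'
    rw [ht', mul_add, mul_one, mul_div_assoc', mul_comm a (b - a), mul_div_assoc, div_self ha', mul_one]; ring
  have hbp : b ^ (-p) = a ^ (-p) * (1 + t) ^ (-p) := by
    rw [hb, Real.mul_rpow ha.le h1t.le]
  have hap : (0:ℝ) < a ^ (-p) := Real.rpow_pos_of_pos ha _
  have h2 : a ^ (-p) * (1 - p * t) ≤ b ^ (-p) := by
    rw [hbp]; exact mul_le_mul_of_nonneg_left key hap.le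
  have h3 : a ^ (-p - 1) = a ^ (-p) / a := by rw [Real.rpow_sub ha, Real.rpow_one]
  have h4 : a ^ (-p) * (p * t) = p * (b - a) * (a ^ (-p) / a) := by
    rw [ht']; field_simp
  have expand : a ^ (-p) * (1 - p * t) = a ^ (-p) - a ^ (-p) * (p * t) := by ring
  rw [h3]
  linarith [h2, h4, expand]

/-- Pointwise kernel estimate. -/
private lemma key_pointwise {x b β : ℝ} (hx : 0 < x) (hxb : x ≤ b)
    (hβ0 : 0 < β) (hβ2 : β < 1/2) :
    |x ^ (-β) - b ^ (-β)| ^ 2 ≤ (2*β) * (b - x) * x ^ (-(2*β) - 1) := by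
  have hb : 0 < b := lt_of_lt_of_le hx hxb
  have hA : b ^ (-β) ≤ x ^ (-β) := Real.rpow_le_rpow_of_nonpos hx hxb (by linarith)
  have hc : 0 ≤ b ^ (-β) := (Real.rpow_pos_of_pos hb _).le
  have habs : |x ^ (-β) - b ^ (-β)| = x ^ (-β) - b ^ (-β) := abs_of_nonneg (by linarith)
  have hx2 : x ^ (-β) * x ^ (-β) = x ^ (-(2*β)) := by
    rw [← Real.rpow_add hx]; congr 1; ring
  have hb2 : b ^ (-β) * b ^ (-β) = b ^ (-(2*β)) := by
    rw [← Real.rpow_add hb]; congr 1; ring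
  have hbn := bern_neg hx hxb (by linarith : (0:ℝ) < 2*β) (by linarith : 2*β < 1)
  rw [habs]
  calc (x ^ (-β) - b ^ (-β)) ^ 2
      ≤ x ^ (-β) * x ^ (-β) - b ^ (-β) * b ^ (-β) := by nlinarith
    _ = x ^ (-(2*β)) - b ^ (-(2*β)) := by rw [hx2, hb2]
    _ ≤ (2*β) * (b - x) * x ^ (-(2*β) - 1) := hbn

/-- Interval integrability of the squared kernel difference. -/
private lemma II_G {z u v c β : ℝ} (huv : u ≤ v) (hvz : v ≤ z)
    (hβ0 : 0 < β) (hβ2 : β < 1/2) :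
    IntervalIntegrable (fun s => |(z - s) ^ (-β) - c| ^ 2) volume u v := by
  have hkey : (fun s : ℝ => |(z - s) ^ (-β) - c| ^ 2)
      = fun s => ((z - s) ^ (-β))^2 - 2*c*((z - s) ^ (-β)) + c^2 := by
    funext s; rw [sq_abs]; ring
  rw [hkey]
  have h2 : IntervalIntegrable (fun s => (z - s) ^ (-β)) volume u v := by
    have := (intervalIntegrable_rpow' (by linarith : (-1:ℝ) < -β)
      (a := z - v) (b := z - u)).comp_sub_left z
    simpa using this.symm
  have h1 : IntervalIntegrable (fun s => ((z - s) ^ (-β))^2) volume u v := by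
    have base : IntervalIntegrable (fun x : ℝ => (x ^ (-β))^2) volume (z - v) (z - u) := by
      rw [intervalIntegrable_iff_integrableOn_Ioc_of_le (by linarith)]
      have hIoc : IntegrableOn (fun x : ℝ => x ^ (-β*2)) (Set.Ioc (z-v) (z-u)) volume :=
        (intervalIntegrable_rpow' (by linarith : (-1:ℝ) < -β*2)).1
      apply hIoc.congr_fun ?_ measurableSet_Ioc
      intro x hx
      have hx0 : 0 < x := lt_of_le_of_lt (by linarith : (0:ℝ) ≤ z - v) hx.1
      show x ^ (-β*2) = (x ^ (-β))^2
      rw [show (-β*2 : ℝ) = -β * ((2:ℕ):ℝ) by push_cast; ring,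
        Real.rpow_mul hx0.le, Real.rpow_natCast]
    have := base.comp_sub_left z
    simpa using this.symm
  exact (h1.sub (h2.const_mul (2*c))).add intervalIntegrable_const

/-- Interval integrability of the shifted power. -/
private lemma II_H {q : ℝ} (z u v : ℝ) (hq : -1 < q) :
    IntervalIntegrable (fun s => (z - s) ^ q) volume u v := by
  have := (intervalIntegrable_rpow' hq (a := z - v) (b := z - u)).comp_sub_left z
  simpa using this.symm

/-- Sum bound: `∑_{k<m} (k+1)^{-(1+p)} ≤ 1 + 1/p`. -/
private lemma sum_bound {p : ℝ} (hp : 0 < p) (m : ℕ) :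
    ∑ k ∈ Finset.range m, ((k:ℝ) + 1) ^ (-(1 + p)) ≤ 1 + 1 / p := by
  cases m with
  | zero =>
      simp only [Finset.range_zero, Finset.sum_empty]
      have := one_div_pos.mpr hp
      linarith
  | succ j =>
    rw [Finset.sum_range_succ']
    have h0 : (((0:ℕ):ℝ) + 1) ^ (-(1+p)) = 1 := by norm_num
    have hanti : AntitoneOn (fun x : ℝ => x ^ (-(1+p))) (Set.Icc 1 (1 + (j:ℕ))) := by
      intro u hu v hv huv
      exact Real.rpow_le_rpow_of_nonpos (lt_of_lt_of_le one_pos hu.1) huv (by linarith)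
    have hsum := hanti.sum_le_integral
    have heq : ∑ i ∈ Finset.range j, (((i:ℕ)+1:ℝ) + 1) ^ (-(1+p))
        = ∑ i ∈ Finset.range j, (fun x : ℝ => x ^ (-(1+p))) ((1:ℝ) + ((i+1:ℕ):ℝ)) := by
      apply Finset.sum_congr rfl
      intro i _
      push_cast
      ring_nf
    have hval : ∫ x in (1:ℝ)..(1 + (j:ℕ)), x ^ (-(1+p))
        = ((1+(j:ℝ)) ^ (-p) - 1) / (-p) := by
      rw [integral_rpow (Or.inr ⟨by intro h; simp at h; linarith,
        by
          rw [Set.uIcc_of_le (le_add_of_nonneg_right (Nat.cast_nonneg j) : (1:ℝ) ≤ 1 + (j:ℕ))]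
          intro h
          rw [Set.mem_Icc] at h
          linarith [h.1]⟩)]
      rw [show (-(1+p)+1 : ℝ) = -p by ring, Real.one_rpow]
    have hup : ((1+(j:ℝ)) ^ (-p) - 1) / (-p) ≤ 1 / p := by
      rw [show ((1+(j:ℝ)) ^ (-p) - 1) / (-p) = (1 - (1+(j:ℝ)) ^ (-p)) / p by
        rw [div_neg, ← neg_div, neg_sub]]
      rw [div_le_div_iff₀ hp hp]
      nlinarith [Real.rpow_nonneg (show (0:ℝ) ≤ 1 + (j:ℝ) by positivity) (-p)]
    have hmain : ∑ i ∈ Finset.range j, (((i:ℕ)+1:ℝ) + 1) ^ (-(1+p)) ≤ 1 / p := by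
      rw [heq]
      calc _ ≤ ∫ x in (1:ℝ)..(1 + (j:ℕ)), x ^ (-(1+p)) := hsum
        _ = ((1+(j:ℝ)) ^ (-p) - 1) / (-p) := hval
        _ ≤ 1 / p := hup
    have hcast : ∀ i : ℕ, (((i+1:ℕ):ℝ) + 1) ^ (-(1+p)) = (((i:ℕ)+1:ℝ) + 1) ^ (-(1+p)) := by
      intro i; push_cast; ring_nf
    rw [h0]
    calc (∑ i ∈ Finset.range j, (((i+1:ℕ):ℝ) + 1) ^ (-(1+p))) + 1
        = (∑ i ∈ Finset.range j, (((i:ℕ)+1:ℝ) + 1) ^ (-(1+p))) + 1 := by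
          rw [Finset.sum_congr rfl (fun i _ => hcast i)]
      _ ≤ 1 / p + 1 := by linarith [hmain]
      _ = 1 + 1 / p := by ring

/-- Arithmetic bound for a middle-interval term. -/
private lemma term_bound {p r A a k L : ℝ} (hp : 0 < p) (hp1 : p < 1) (hr : 1 ≤ r)
    (ha : 0 < a) (haA : a ≤ A) (hk : 1 ≤ k) (hL : a * k ≤ L) :
    (r * a) * (p * (r * a) * L ^ (-p - 1)) ≤ p * r ^ 2 * A ^ (1 - p) * k ^ (-(1 + p)) := by
  have hk0 : (0:ℝ) < k := lt_of_lt_of_le one_pos hk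
  have hak : 0 < a * k := mul_pos ha hk0
  have hL0 : 0 < L := lt_of_lt_of_le hak hL
  have hr0 : (0:ℝ) < r := lt_of_lt_of_le one_pos hr
  have h1 : L ^ (-p-1) ≤ (a*k) ^ (-p-1) :=
    Real.rpow_le_rpow_of_nonpos hak hL (by linarith)
  have h2 : (a*k) ^ (-p-1) = a ^ (-p-1) * k ^ (-p-1) := Real.mul_rpow ha.le hk0.le
  have h3 : a * a * a ^ (-p-1) = a ^ (1-p) := by
    nth_rewrite 1 [← Real.rpow_one a]
    nth_rewrite 2 [← Real.rpow_one a]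
    rw [← Real.rpow_add ha, ← Real.rpow_add ha]
    congr 1
    ring
  have h4 : a ^ (1-p) ≤ A ^ (1-p) := Real.rpow_le_rpow ha.le haA (by linarith)
  have h5 : (0:ℝ) ≤ k ^ (-p-1) := Real.rpow_nonneg hk0.le _
  have h6 : k ^ (-p-1) = k ^ (-(1 + p)) := by rw [show (-p-1:ℝ) = -(1+p) by ring]
  calc (r * a) * (p * (r * a) * L ^ (-p-1))
      = p * r^2 * (a * a * L ^ (-p-1)) := by ring
    _ ≤ p * r^2 * (a * a * (a ^ (-p-1) * k ^ (-p-1))) := by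
        apply mul_le_mul_of_nonneg_left _ (by positivity)
        rw [← h2]
        exact mul_le_mul_of_nonneg_left h1 (mul_nonneg ha.le ha.le)
    _ = (a * a * a ^ (-p-1)) * (p * r^2) * k ^ (-p-1) := by ring
    _ = a ^ (1-p) * (p * r^2) * k ^ (-p-1) := by rw [h3]
    _ ≤ A ^ (1-p) * (p * r^2) * k ^ (-p-1) :=
        mul_le_mul_of_nonneg_right (mul_le_mul_of_nonneg_right h4 (by positivity)) h5
    _ = p * r^2 * A ^ (1-p) * k ^ (-(1 + p)) := by rw [h6]; ring

/-- The graded mesh point `t_n = T * (n/N)^r`. -/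
noncomputable def gmesh (T r : ℝ) (N n : ℕ) : ℝ := T * ((n : ℝ) / (N : ℝ)) ^ r

set_option maxHeartbeats 2000000 in
/-- Squared-difference kernel bound on the graded mesh (equation `eq.diffSqureSingle`). -/
theorem stmt13 (T r β : ℝ) (hT : 0 < T) (hr : 1 ≤ r)
    (hβ : β ∈ Set.Ioo (0:ℝ) (1/2)) :
    ∃ C > (0:ℝ), ∀ N : ℕ, 1 ≤ N → ∀ hat : ℝ → ℝ,
      (∀ i : ℕ, i < N →
        ∀ s ∈ Set.Ico (gmesh T r N i) (gmesh T r N (i + 1)), hat s = gmesh T r N i) →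
      ∀ n : ℕ, 1 ≤ n → n ≤ N →
        (∫ s in (0:ℝ)..(gmesh T r N n),
            |(gmesh T r N n - s) ^ (-β) - (gmesh T r N n - hat s) ^ (-β)| ^ 2)
          ≤ C * (N : ℝ) ^ (-(1 - 2 * β)) := by
  obtain ⟨hβ0, hβ2⟩ := hβ
  have hβ2' : 2 * β < 1 := by linarith
  have hr0 : (0:ℝ) < r := lt_of_lt_of_le one_pos hr
  set p : ℝ := 2 * β with hp_def
  have hp0 : 0 < p := by rw [hp_def]; linarith
  have hp1 : p < 1 := hβ2'
  have hCpos : (0:ℝ) < (r*T)^(1-p)/(1-p) + p * r^2 * T^(1-p) * (1 + 1/p) := by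
    have h1 : (0:ℝ) < (r*T)^(1-p) := Real.rpow_pos_of_pos (mul_pos hr0 hT) _
    have h2 : (0:ℝ) < T^(1-p) := Real.rpow_pos_of_pos hT _
    have h3 : (0:ℝ) < 1 - p := by linarith
    have h4 : (0:ℝ) < 1 + 1/p := by positivity
    positivity
  refine ⟨(r*T)^(1-p)/(1-p) + p * r^2 * T^(1-p) * (1 + 1/p), hCpos, ?_⟩
  intro N hN hat hhat n hn1 hnN
  obtain ⟨m, rfl⟩ : ∃ m, n = m + 1 := ⟨n - 1, by omega⟩
  set t : ℕ → ℝ := gmesh T r N with ht_def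
  have tdef : ∀ i : ℕ, t i = T * ((i:ℝ)/(N:ℝ))^r := fun i => rfl
  have hN0 : (0:ℝ) < N := by exact_mod_cast hN
  have tmono : ∀ i j : ℕ, i ≤ j → t i ≤ t j := by
    intro i j hij
    rw [tdef, tdef]
    apply mul_le_mul_of_nonneg_left _ hT.le
    apply Real.rpow_le_rpow (by positivity) _ (by linarith)
    apply div_le_div_of_nonneg_right _ hN0.le
    exact_mod_cast hij
  have tstrict : ∀ i j : ℕ, i < j → t i < t j := by
    intro i j hij
    rw [tdef, tdef]
    apply mul_lt_mul_of_pos_left _ hT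
    apply Real.rpow_lt_rpow (by positivity) _ hr0
    apply div_lt_div_of_pos_right _ hN0
    exact_mod_cast hij
  have t0 : t 0 = 0 := by
    rw [tdef]
    simp [Real.zero_rpow hr0.ne']
  have hq_pos : ∀ i : ℕ, (0:ℝ) < (((i:ℝ)+1)/N)^(r-1) :=
    fun i => Real.rpow_pos_of_pos (by positivity) _
  -- step bound
  have hstep : ∀ i : ℕ, t (i+1) - t i ≤ r * (T * ((((i:ℝ)+1)/N)^(r-1)) / N) := by
    intro i
    have hx : (0:ℝ) < ((i:ℝ)+1)/N := by positivity
    have hy : (0:ℝ) ≤ (i:ℝ)/N := by positivity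
    have h := bern_ge hx hy hr
    have hxy : (i:ℝ)/N - ((i:ℝ)+1)/N = -(1/N) := by ring
    rw [hxy] at h
    have e1 : t (i+1) = T * ((((i:ℝ)+1))/N)^r := by
      rw [tdef]; push_cast; ring_nf
    have h2 : ((((i:ℝ)+1))/N)^r - ((i:ℝ)/N)^r
        ≤ r * ((((i:ℝ)+1))/N)^(r-1) * (1/N) := by linarith
    calc t (i+1) - t i = T * (((((i:ℝ)+1))/N)^r - ((i:ℝ)/N)^r) := by
          rw [e1, tdef]; ring
      _ ≤ T * (r * ((((i:ℝ)+1))/N)^(r-1) * (1/N)) := mul_le_mul_of_nonneg_left h2 hT.le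
      _ = r * (T * ((((i:ℝ)+1)/N)^(r-1)) / N) := by ring
  -- gap bound
  have hgap : ∀ i : ℕ, i + 1 ≤ m + 1 →
      T * ((((i:ℝ)+1)/N)^(r-1)) / N * (((m:ℝ)+1) - i - 1) ≤ t (m+1) - t (i+1) := by
    intro i hin
    have hx : (0:ℝ) < ((i:ℝ)+1)/N := by positivity
    have hy : (0:ℝ) ≤ ((m:ℝ)+1)/N := by positivity
    have h := bern_ge hx hy hr
    have hk0 : (0:ℝ) ≤ ((m:ℝ)+1) - i - 1 := by
      have : (i:ℝ) + 1 ≤ (m:ℝ) + 1 := by exact_mod_cast hin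
      linarith
    have hyx : ((m:ℝ)+1)/N - ((i:ℝ)+1)/N = (((m:ℝ)+1) - i - 1)/N := by ring
    rw [hyx] at h
    have hnn : (0:ℝ) ≤ (((i:ℝ)+1)/N)^(r-1) * ((((m:ℝ)+1) - i - 1)/N) :=
      mul_nonneg (hq_pos i).le (div_nonneg hk0 hN0.le)
    have hrq : (((i:ℝ)+1)/N)^(r-1) * ((((m:ℝ)+1) - i - 1)/N)
        ≤ r * ((((i:ℝ)+1)/N)^(r-1)) * ((((m:ℝ)+1) - i - 1)/N) := by
      nlinarith [mul_nonneg (sub_nonneg.mpr hr) hnn]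
    have e1 : t (i+1) = T * ((((i:ℝ)+1))/N)^r := by
      rw [tdef]; push_cast; ring_nf
    have e2 : t (m+1) = T * ((((m:ℝ)+1))/N)^r := by
      rw [tdef]; push_cast; ring_nf
    have h2 : (((i:ℝ)+1)/N)^(r-1) * ((((m:ℝ)+1) - i - 1)/N)
        ≤ ((((m:ℝ)+1))/N)^r - ((((i:ℝ)+1))/N)^r := by linarith
    calc T * ((((i:ℝ)+1)/N)^(r-1)) / N * (((m:ℝ)+1) - i - 1)
        = T * ((((i:ℝ)+1)/N)^(r-1) * ((((m:ℝ)+1) - i - 1)/N)) := by ring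
      _ ≤ T * (((((m:ℝ)+1))/N)^r - ((((i:ℝ)+1))/N)^r) := mul_le_mul_of_nonneg_left h2 hT.le
      _ = t (m+1) - t (i+1) := by rw [e1, e2]; ring
  -- definitions of F and G
  set F : ℝ → ℝ := fun s => |(t (m+1) - s) ^ (-β) - (t (m+1) - hat s) ^ (-β)| ^ 2 with hF_def
  have hGint : ∀ i : ℕ, i < m + 1 →
      IntervalIntegrable (fun s => |(t (m+1) - s) ^ (-β) - (t (m+1) - t i) ^ (-β)| ^ 2)
        volume (t i) (t (i+1)) :=
    fun i hi => II_G (tmono i (i+1) (by omega)) (tmono (i+1) (m+1) (by omega)) hβ0 hβ2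
  have hae_ne : ∀ c : ℝ, ∀ᵐ x : ℝ, x ≠ c := by
    intro c
    have h := measure_eq_zero_iff_ae_notMem.mp (Real.volume_singleton (a := c))
    simpa using h
  have hFeq : ∀ i : ℕ, i < m + 1 → ∀ x, t i ≤ x → x < t (i+1) →
      F x = |(t (m+1) - x) ^ (-β) - (t (m+1) - t i) ^ (-β)| ^ 2 := by
    intro i hi x h1 h2
    have := hhat i (by omega) x ⟨h1, h2⟩
    rw [hF_def]
    simp only [this]
  have hFint : ∀ i : ℕ, i < m + 1 → IntervalIntegrable F volume (t i) (t (i+1)) := by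
    intro i hi
    rw [intervalIntegrable_iff_integrableOn_Ioc_of_le (tmono i (i+1) (by omega))]
    apply (hGint i hi).1.congr
    filter_upwards [ae_restrict_mem measurableSet_Ioc,
      ae_restrict_of_ae (hae_ne (t (i+1)))] with x hx hne
    exact (hFeq i hi x hx.1.le (lt_of_le_of_ne hx.2 hne)).symm
  have hsplit : ∫ s in (0:ℝ)..(t (m+1)), F s
      = ∑ i ∈ Finset.range (m+1), ∫ s in (t i)..(t (i+1)), F s := by
    rw [intervalIntegral.sum_integral_adjacent_intervals (fun k hk => hFint k hk), t0]
  have hcongr : ∀ i : ℕ, i < m + 1 → (∫ s in (t i)..(t (i+1)), F s)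
      = ∫ s in (t i)..(t (i+1)), |(t (m+1) - s) ^ (-β) - (t (m+1) - t i) ^ (-β)| ^ 2 := by
    intro i hi
    apply intervalIntegral.integral_congr_ae
    filter_upwards [hae_ne (t (i+1))] with x hne hmem
    rw [Set.uIoc_of_le (tmono i (i+1) (by omega))] at hmem
    exact hFeq i hi x hmem.1.le (lt_of_le_of_ne hmem.2 hne)
  -- middle interval bound
  have hmid : ∀ i : ℕ, i < m →
      (∫ s in (t i)..(t (i+1)), |(t (m+1) - s) ^ (-β) - (t (m+1) - t i) ^ (-β)| ^ 2)
        ≤ p * r^2 * (T/N)^(1-p) * (((m - i : ℕ):ℝ))^(-(1+p)) := by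
    intro i hi
    have hgap_pos : 0 < t (m+1) - t (i+1) := sub_pos.mpr (tstrict _ _ (by omega))
    have hai_pos : (0:ℝ) < T * ((((i:ℝ)+1)/N)^(r-1)) / N :=
      div_pos (mul_pos hT (hq_pos i)) hN0
    have hpt : ∀ s ∈ Set.Icc (t i) (t (i+1)),
        |(t (m+1) - s) ^ (-β) - (t (m+1) - t i) ^ (-β)| ^ 2
          ≤ p * (r * (T * ((((i:ℝ)+1)/N)^(r-1)) / N)) * (t (m+1) - t (i+1)) ^ (-p-1) := by
      intro s hs
      have hx0 : 0 < t (m+1) - s := by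
        have := hs.2; linarith [hgap_pos]
      have hxb : t (m+1) - s ≤ t (m+1) - t i := by linarith [hs.1]
      have hkey := key_pointwise hx0 hxb hβ0 hβ2
      rw [← hp_def] at hkey
      have h1 : (t (m+1) - t i) - (t (m+1) - s) ≤ r * (T * ((((i:ℝ)+1)/N)^(r-1)) / N) := by
        have hst := hstep i
        have := hs.1; have := hs.2
        linarith
      have h2 : (t (m+1) - s) ^ (-p-1) ≤ (t (m+1) - t (i+1)) ^ (-p-1) :=
        Real.rpow_le_rpow_of_nonpos hgap_pos (by linarith [hs.2]) (by linarith)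
      have h1nn : (0:ℝ) ≤ (t (m+1) - t i) - (t (m+1) - s) := by linarith [hs.1]
      calc |(t (m+1) - s) ^ (-β) - (t (m+1) - t i) ^ (-β)| ^ 2
          ≤ p * ((t (m+1) - t i) - (t (m+1) - s)) * (t (m+1) - s) ^ (-p - 1) := hkey
        _ ≤ p * (r * (T * ((((i:ℝ)+1)/N)^(r-1)) / N)) * (t (m+1) - t (i+1)) ^ (-p-1) := by
            apply mul_le_mul
            · exact mul_le_mul_of_nonneg_left h1 hp0.le
            · exact h2
            · exact Real.rpow_nonneg hx0.le _
            · exact mul_nonneg hp0.le (mul_nonneg hr0.le hai_pos.le)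
    have hIG := hGint i (by omega)
    have hmono_int := intervalIntegral.integral_mono_on (tmono i (i+1) (by omega))
      hIG intervalIntegrable_const hpt
    rw [intervalIntegral.integral_const] at hmono_int
    have hB_nonneg : (0:ℝ) ≤ p * (r * (T * ((((i:ℝ)+1)/N)^(r-1)) / N))
        * (t (m+1) - t (i+1)) ^ (-p-1) :=
      mul_nonneg (mul_nonneg hp0.le (mul_nonneg hr0.le hai_pos.le))
        (Real.rpow_nonneg hgap_pos.le _)
    have hlen : t (i+1) - t i ≤ r * (T * ((((i:ℝ)+1)/N)^(r-1)) / N) := hstep i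
    have hq1 : (((i:ℝ)+1)/N)^(r-1) ≤ 1 := by
      apply Real.rpow_le_one (by positivity) _ (by linarith)
      rw [div_le_one hN0]
      have : (i:ℝ) + 1 ≤ (N:ℝ) := by
        have : i + 1 ≤ N := by omega
        exact_mod_cast this
      linarith
    have haA : T * ((((i:ℝ)+1)/N)^(r-1)) / N ≤ T / N := by
      rw [div_le_div_iff₀ hN0 hN0]
      nlinarith [mul_nonneg (mul_nonneg (sub_nonneg.mpr hq1) hT.le) hN0.le]
    have hk1 : (1:ℝ) ≤ ((m - i : ℕ):ℝ) := by
      have : 1 ≤ m - i := by omega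
      exact_mod_cast this
    have hLk : (T * ((((i:ℝ)+1)/N)^(r-1)) / N) * ((m - i : ℕ):ℝ) ≤ t (m+1) - t (i+1) := by
      have hg := hgap i (by omega)
      have hcast : ((m - i : ℕ):ℝ) = ((m:ℝ)+1) - i - 1 := by
        rw [Nat.cast_sub hi.le]; ring
      rw [hcast]
      exact hg
    have htb := term_bound hp0 hp1 hr hai_pos haA hk1 hLk
    calc (∫ s in (t i)..(t (i+1)), |(t (m+1) - s) ^ (-β) - (t (m+1) - t i) ^ (-β)| ^ 2)
        ≤ (t (i+1) - t i) • (p * (r * (T * ((((i:ℝ)+1)/N)^(r-1)) / N))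
            * (t (m+1) - t (i+1)) ^ (-p-1)) := hmono_int
      _ = (t (i+1) - t i) * (p * (r * (T * ((((i:ℝ)+1)/N)^(r-1)) / N))
            * (t (m+1) - t (i+1)) ^ (-p-1)) := by rw [smul_eq_mul]
      _ ≤ (r * (T * ((((i:ℝ)+1)/N)^(r-1)) / N)) * (p * (r * (T * ((((i:ℝ)+1)/N)^(r-1)) / N))
            * (t (m+1) - t (i+1)) ^ (-p-1)) := mul_le_mul_of_nonneg_right hlen hB_nonneg
      _ ≤ p * r^2 * (T/N)^(1-p) * (((m - i : ℕ):ℝ))^(-(1+p)) := htb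
  -- last interval bound
  have hlast : (∫ s in (t m)..(t (m+1)),
        |(t (m+1) - s) ^ (-β) - (t (m+1) - t m) ^ (-β)| ^ 2)
      ≤ (r*T/N)^(1-p) / (1-p) := by
    have hmm : t m ≤ t (m+1) := tmono _ _ (by omega)
    have hmm' : t m < t (m+1) := tstrict _ _ (by omega)
    have hG := hGint m (by omega)
    have hH : IntervalIntegrable (fun s => (t (m+1) - s) ^ (-p)) volume (t m) (t (m+1)) :=
      II_H _ _ _ (by linarith)
    have hle : (∫ s in (t m)..(t (m+1)),
          |(t (m+1) - s) ^ (-β) - (t (m+1) - t m) ^ (-β)| ^ 2)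
        ≤ ∫ s in (t m)..(t (m+1)), (t (m+1) - s) ^ (-p) := by
      rw [intervalIntegral.integral_of_le hmm, intervalIntegral.integral_of_le hmm,
        integral_Ioc_eq_integral_Ioo, integral_Ioc_eq_integral_Ioo]
      apply setIntegral_mono_on (hG.1.mono_set Set.Ioo_subset_Ioc_self)
        (hH.1.mono_set Set.Ioo_subset_Ioc_self) measurableSet_Ioo
      intro s hs
      have hx0 : 0 < t (m+1) - s := by linarith [hs.2]
      have hxb : t (m+1) - s ≤ t (m+1) - t m := by linarith [hs.1]
      have hA : (t (m+1) - t m) ^ (-β) ≤ (t (m+1) - s) ^ (-β) :=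
        Real.rpow_le_rpow_of_nonpos hx0 hxb (by linarith)
      have hc0 : (0:ℝ) ≤ (t (m+1) - t m) ^ (-β) :=
        Real.rpow_nonneg (by linarith) _
      have habs : |(t (m+1) - s) ^ (-β) - (t (m+1) - t m) ^ (-β)|
          = (t (m+1) - s) ^ (-β) - (t (m+1) - t m) ^ (-β) := abs_of_nonneg (by linarith)
      calc |(t (m+1) - s) ^ (-β) - (t (m+1) - t m) ^ (-β)| ^ 2
          ≤ (t (m+1) - s) ^ (-β) * (t (m+1) - s) ^ (-β) := by rw [habs]; nlinarith
        _ = (t (m+1) - s) ^ (-p) := by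
            rw [← Real.rpow_add hx0, hp_def]; congr 1; ring
    have hcompute : (∫ s in (t m)..(t (m+1)), (t (m+1) - s) ^ (-p))
        = (t (m+1) - t m) ^ (1-p) / (1-p) := by
      rw [intervalIntegral.integral_comp_sub_left (fun x : ℝ => x ^ (-p)) (t (m+1))]
      rw [sub_self]
      rw [integral_rpow (Or.inl (by linarith : (-1:ℝ) < -p))]
      rw [Real.zero_rpow (by intro h; linarith : (-p+1:ℝ) ≠ 0)]
      rw [show (-p+1 : ℝ) = 1-p by ring]
      rw [sub_zero]
    have hq1 : (((m:ℝ)+1)/N)^(r-1) ≤ 1 := by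
      apply Real.rpow_le_one (by positivity) _ (by linarith)
      rw [div_le_one hN0]
      have : (m:ℝ) + 1 ≤ (N:ℝ) := by exact_mod_cast hnN
      linarith
    have hh : t (m+1) - t m ≤ r*T/N := by
      have h1 := hstep m
      have h2 : T * ((((m:ℝ)+1)/N)^(r-1)) / N ≤ T / N := by
        rw [div_le_div_iff₀ hN0 hN0]
        nlinarith [mul_nonneg (mul_nonneg (sub_nonneg.mpr hq1) hT.le) hN0.le]
      have h3 := mul_le_mul_of_nonneg_left h2 hr0.le
      calc t (m+1) - t m ≤ r * (T * ((((m:ℝ)+1)/N)^(r-1)) / N) := h1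
        _ ≤ r * (T / N) := h3
        _ = r*T/N := by ring
    have h4 : (t (m+1) - t m) ^ (1-p) ≤ (r*T/N) ^ (1-p) :=
      Real.rpow_le_rpow (by linarith) hh (by linarith)
    calc (∫ s in (t m)..(t (m+1)),
          |(t (m+1) - s) ^ (-β) - (t (m+1) - t m) ^ (-β)| ^ 2)
        ≤ ∫ s in (t m)..(t (m+1)), (t (m+1) - s) ^ (-p) := hle
      _ = (t (m+1) - t m) ^ (1-p) / (1-p) := hcompute
      _ ≤ (r*T/N)^(1-p) / (1-p) := div_le_div_of_nonneg_right h4 (by linarith)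
  -- sum reindex and bound
  have hsum_le : ∑ i ∈ Finset.range m, (((m - i : ℕ):ℝ))^(-(1+p)) ≤ 1 + 1/p := by
    have hre : ∑ i ∈ Finset.range m, (((m - i : ℕ):ℝ))^(-(1+p))
        = ∑ j ∈ Finset.range m, ((j:ℝ) + 1)^(-(1+p)) := by
      rw [← Finset.sum_range_reflect (fun j => ((j:ℝ) + 1)^(-(1+p))) m]
      apply Finset.sum_congr rfl
      intro i hi
      rw [Finset.mem_range] at hi
      have hcast : ((m - i : ℕ):ℝ) = ((m - 1 - i : ℕ):ℝ) + 1 := by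
        have h : m - i = (m - 1 - i) + 1 := by omega
        rw [h]; push_cast; ring
      rw [hcast]
    rw [hre]
    exact sum_bound hp0 m
  have hrTD : (r*T/N)^(1-p) = (r*T)^(1-p) * (N:ℝ)^(-(1-p)) := by
    rw [Real.div_rpow (by positivity) (Nat.cast_nonneg N), Real.rpow_neg (Nat.cast_nonneg N),
      div_eq_mul_inv]
  have hTD : (T/N)^(1-p) = T^(1-p) * (N:ℝ)^(-(1-p)) := by
    rw [Real.div_rpow hT.le (Nat.cast_nonneg N), Real.rpow_neg (Nat.cast_nonneg N),
      div_eq_mul_inv]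
  calc (∫ s in (0:ℝ)..(t (m+1)), F s)
      = ∑ i ∈ Finset.range (m+1), ∫ s in (t i)..(t (i+1)), F s := hsplit
    _ = ∑ i ∈ Finset.range (m+1), ∫ s in (t i)..(t (i+1)),
          |(t (m+1) - s) ^ (-β) - (t (m+1) - t i) ^ (-β)| ^ 2 :=
        Finset.sum_congr rfl (fun i hi => hcongr i (Finset.mem_range.mp hi))
    _ = (∑ i ∈ Finset.range m, ∫ s in (t i)..(t (i+1)),
          |(t (m+1) - s) ^ (-β) - (t (m+1) - t i) ^ (-β)| ^ 2)
        + ∫ s in (t m)..(t (m+1)),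
          |(t (m+1) - s) ^ (-β) - (t (m+1) - t m) ^ (-β)| ^ 2 := Finset.sum_range_succ _ m
    _ ≤ (∑ i ∈ Finset.range m, p * r^2 * (T/N)^(1-p) * (((m - i : ℕ):ℝ))^(-(1+p)))
        + (r*T/N)^(1-p) / (1-p) :=
        add_le_add (Finset.sum_le_sum (fun i hi => hmid i (Finset.mem_range.mp hi))) hlast
    _ = p * r^2 * (T/N)^(1-p) * (∑ i ∈ Finset.range m, (((m - i : ℕ):ℝ))^(-(1+p)))
        + (r*T/N)^(1-p) / (1-p) := by rw [Finset.mul_sum]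
    _ ≤ p * r^2 * (T/N)^(1-p) * (1 + 1/p) + (r*T/N)^(1-p) / (1-p) := by
        apply add_le_add_left
        apply mul_le_mul_of_nonneg_left hsum_le
        exact mul_nonneg (mul_nonneg hp0.le (sq_nonneg r)) (Real.rpow_nonneg (by positivity) _)
    _ = ((r*T)^(1-p)/(1-p) + p * r^2 * T^(1-p) * (1 + 1/p)) * (N:ℝ)^(-(1-p)) := by
        rw [hrTD, hTD]; ring
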